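/- Let p ≥ 2 and f as in the change of variables, and let v ∈ Lᵖ(ℝᴺ). Then inf_{ξ>0} (1/ξ)[1 + ∫_{ℝᴺ} |f(ξ v(x))|^p dx] ≤ C (∫_{ℝᴺ} |v|^p)^{1/p} for a constant C > 0 depending only on p. Hence the quantity ‖v‖ = |∇v|_p + inf_{ξ>0} (1/ξ)[1 + ∫ |f(ξ v)|^p] satisfies ‖v‖ ≤ c₁ ‖v‖_{W^{1,p}} for all v ∈ W^{1,p}(ℝᴺ). -/

import Mathlib

open MeasureTheory

/-- for `v ∈ Lᵖ(ℝᴺ)`,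
`inf_{ξ>0} (1/ξ)[1 + ∫ |f(ξ v)|^p] ≤ C (∫ |v|^p)^(1/p)` with `C` depending only on `p`;
hence `‖v‖ = |∇v|_p + inf_{ξ>0}(1/ξ)[1 + ∫ |f(ξ v)|^p] ≤ c₁ ‖v‖_{W^{1,p}}`. -/
theorem stmt11 (N : ℕ) (p : ℝ) (hp : 2 ≤ p) (hN : p < N) (f : ℝ → ℝ)
    (hodd : ∀ t : ℝ, f (-t) = - f t)
    (hf0 : f 0 = 0)
    (hf' : ∀ t : ℝ, HasDerivAt f ((1 + 2 ^ (p - 1) * |f t| ^ p) ^ (-(1 / p))) t) :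
    ∃ C : ℝ, 0 < C ∧
      (∀ v : EuclideanSpace ℝ (Fin N) → ℝ, MemLp v (ENNReal.ofReal p) volume →
        sInf ((fun ξ : ℝ =>
            (1 / ξ) * (1 + ∫ x, |f (ξ * v x)| ^ p)) '' Set.Ioi 0) ≤
          C * (∫ x, |v x| ^ p) ^ (1 / p)) ∧
      ∃ c₁ : ℝ, 0 < c₁ ∧
        ∀ v : EuclideanSpace ℝ (Fin N) → ℝ,
          MemLp v (ENNReal.ofReal p) volume →
          Differentiable ℝ v →
          MemLp (fun x => fderiv ℝ v x) (ENNReal.ofReal p) volume →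
          (∫ x, ‖fderiv ℝ v x‖ ^ p) ^ (1 / p) +
              sInf ((fun ξ : ℝ =>
                (1 / ξ) * (1 + ∫ x, |f (ξ * v x)| ^ p)) '' Set.Ioi 0) ≤
            c₁ * ((∫ x, ‖fderiv ℝ v x‖ ^ p) + ∫ x, |v x| ^ p) ^ (1 / p) := by
  have hp0 : (0:ℝ) < p := by linarith
  -- |f t| ≤ |t|
  have hf_le : ∀ t : ℝ, |f t| ≤ |t| := by
    intro t
    have hbound : ∀ x : ℝ, x ∈ (Set.univ : Set ℝ) →
        ‖(1 + 2 ^ (p - 1) * |f x| ^ p) ^ (-(1 / p))‖ ≤ 1 := by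
      intro x _
      rw [Real.norm_eq_abs, abs_of_nonneg (Real.rpow_nonneg (by positivity) _)]
      apply Real.rpow_le_one_of_one_le_of_nonpos
      · have h1 : (0:ℝ) ≤ 2 ^ (p - 1) * |f x| ^ p := by positivity
        linarith
      · have : (0:ℝ) < 1 / p := by positivity
        linarith
    have := convex_univ.norm_image_sub_le_of_norm_hasDerivWithin_le
      (fun x _ => (hf' x).hasDerivWithinAt) hbound (Set.mem_univ (0:ℝ)) (Set.mem_univ t)
    simpa [hf0, Real.norm_eq_abs] using this
  -- key estimate
  have key : ∀ v : EuclideanSpace ℝ (Fin N) → ℝ, MemLp v (ENNReal.ofReal p) volume →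
      sInf ((fun ξ : ℝ => (1 / ξ) * (1 + ∫ x, |f (ξ * v x)| ^ p)) '' Set.Ioi 0)
        ≤ 2 * (∫ x, |v x| ^ p) ^ (1 / p) := by
    intro v hv
    set A := ∫ x, |v x| ^ p with hAdef
    have hAnn : 0 ≤ A := integral_nonneg fun x => Real.rpow_nonneg (abs_nonneg _) _
    have hInt : Integrable (fun x => |v x| ^ p) volume := by
      have := hv.integrable_norm_rpow (by simp [hp0]) (by simp)
      simpa [Real.norm_eq_abs, ENNReal.toReal_ofReal hp0.le] using this
    have hbdd : BddBelow ((fun ξ : ℝ => (1 / ξ) * (1 + ∫ x, |f (ξ * v x)| ^ p)) '' Set.Ioi 0) := by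
      refine ⟨0, ?_⟩
      rintro y ⟨ξ, hξ, rfl⟩
      have hξ0 : (0:ℝ) < ξ := hξ
      have hI : 0 ≤ ∫ x, |f (ξ * v x)| ^ p :=
        integral_nonneg fun x => Real.rpow_nonneg (abs_nonneg _) _
      have h1 : (0:ℝ) ≤ 1 / ξ := by positivity
      nlinarith
    have hIb : ∀ ξ : ℝ, 0 < ξ → (∫ x, |f (ξ * v x)| ^ p) ≤ ξ ^ p * A := by
      intro ξ hξ
      have hle : (∫ x, |f (ξ * v x)| ^ p) ≤ ∫ x, ξ ^ p * |v x| ^ p := by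
        apply integral_mono_of_nonneg
        · filter_upwards with x using Real.rpow_nonneg (abs_nonneg _) _
        · exact hInt.const_mul _
        · filter_upwards with x
          calc |f (ξ * v x)| ^ p ≤ |ξ * v x| ^ p :=
                Real.rpow_le_rpow (abs_nonneg _) (hf_le _) hp0.le
            _ = ξ ^ p * |v x| ^ p := by
                rw [abs_mul, abs_of_pos hξ, Real.mul_rpow hξ.le (abs_nonneg _)]
      simpa [integral_const_mul] using hle
    rcases eq_or_lt_of_le hAnn with h0 | hApos
    · -- A = 0 : v = 0 a.e.
      have hv0 : ∀ᵐ x, v x = 0 := by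
        have h := (integral_eq_zero_iff_of_nonneg
          (fun x => Real.rpow_nonneg (abs_nonneg _) _) hInt).mp h0.symm
        filter_upwards [h] with x hx
        have hx' : |v x| ^ p = 0 := hx
        have : |v x| = 0 := by
          by_contra hne
          have : (0:ℝ) < |v x| := lt_of_le_of_ne (abs_nonneg _) (Ne.symm hne)
          exact absurd hx' (ne_of_gt (Real.rpow_pos_of_pos this p))
        exact abs_eq_zero.mp this
      have helem : ∀ ξ : ℝ, 0 < ξ →
          (1/ξ) * (1 + ∫ x, |f (ξ * v x)| ^ p) = 1/ξ := by
        intro ξ hξ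
        have hI0 : (∫ x, |f (ξ * v x)| ^ p) = 0 := by
          rw [integral_congr_ae (g := fun _ => (0:ℝ))]
          · simp
          · filter_upwards [hv0] with x hx
            simp [hx, hf0, Real.zero_rpow (ne_of_gt hp0)]
        rw [hI0]; ring
      have hle0 : sInf ((fun ξ : ℝ => (1 / ξ) * (1 + ∫ x, |f (ξ * v x)| ^ p)) '' Set.Ioi 0)
          ≤ 0 := by
        apply le_of_forall_pos_le_add
        intro ε hε
        have hmem : (1/(1/ε)) * (1 + ∫ x, |f ((1/ε) * v x)| ^ p) ∈
            (fun ξ : ℝ => (1 / ξ) * (1 + ∫ x, |f (ξ * v x)| ^ p)) '' Set.Ioi 0 :=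
          ⟨1/ε, by simpa using hε, rfl⟩
        have := csInf_le hbdd hmem
        rw [helem (1/ε) (by positivity)] at this
        simpa using this
      have : (0:ℝ) ≤ 2 * A ^ (1/p) := by positivity
      linarith
    · -- A > 0 : take ξ = A^(-(1/p))
      set ξ := A ^ (-(1/p)) with hξdef
      have hξpos : 0 < ξ := Real.rpow_pos_of_pos hApos _
      have hmem : (1/ξ) * (1 + ∫ x, |f (ξ * v x)| ^ p) ∈
          (fun ξ : ℝ => (1 / ξ) * (1 + ∫ x, |f (ξ * v x)| ^ p)) '' Set.Ioi 0 :=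
        ⟨ξ, hξpos, rfl⟩
      have h1 := csInf_le hbdd hmem
      have hξp : ξ ^ p * A = 1 := by
        rw [hξdef, ← Real.rpow_mul hAnn]
        have : -(1/p) * p = -1 := by field_simp
        rw [this, Real.rpow_neg_one, inv_mul_cancel₀ (ne_of_gt hApos)]
      have hξinv : 1 / ξ = A ^ (1/p) := by
        rw [hξdef, Real.rpow_neg hAnn, one_div, inv_inv]
      have h2 : (1/ξ) * (1 + ∫ x, |f (ξ * v x)| ^ p) ≤ (1/ξ) * (1 + ξ ^ p * A) := by
        apply mul_le_mul_of_nonneg_left _ (by positivity)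
        linarith [hIb ξ hξpos]
      calc sInf ((fun ξ : ℝ => (1 / ξ) * (1 + ∫ x, |f (ξ * v x)| ^ p)) '' Set.Ioi 0)
          ≤ (1/ξ) * (1 + ∫ x, |f (ξ * v x)| ^ p) := h1
        _ ≤ (1/ξ) * (1 + ξ ^ p * A) := h2
        _ = 2 * A ^ (1/p) := by rw [hξp, hξinv]; ring
  refine ⟨2, two_pos, key, 3, by norm_num, ?_⟩
  intro v hv hdiff hgrad
  have h1 := key v hv
  set D := ∫ x, ‖fderiv ℝ v x‖ ^ p with hD
  set A := ∫ x, |v x| ^ p with hA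
  have hDnn : 0 ≤ D := integral_nonneg fun x => Real.rpow_nonneg (norm_nonneg _) _
  have hAnn : 0 ≤ A := integral_nonneg fun x => Real.rpow_nonneg (abs_nonneg _) _
  have h2 : D ^ (1/p) ≤ (D + A) ^ (1/p) :=
    Real.rpow_le_rpow hDnn (by linarith) (by positivity)
  have h3 : A ^ (1/p) ≤ (D + A) ^ (1/p) :=
    Real.rpow_le_rpow hAnn (by linarith) (by positivity)
  linarith
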